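/- arXiv:0906.5128 — 2 statements merged into one kernel-verified Lean document; each statement's English description precedes it below -/
import Mathlib

section
/- Let G be a locally compact group with left Haar measure μ and modular function ∇. For f, g ∈ C_c(G) define f♯(t) = conj(f(t⁻¹)) ∇(t)⁻¹ and (Kh)(u) = h(u⁻¹) ∇(u)^{−1/2} for a function h on G. Then for every s ∈ G, ∫_G (Kg)(s⁻¹t) · conj((Kf)(t)) dμ(t) = ∇(s)^{1/2} · (f♯ ∗ g)(s). (This is the integral identity proved in Lemma 4.1, identifying the coefficient function ω_{Kg,Kf} with ∇^{1/2}·(f♯ ∗ g).) -/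
open MeasureTheory Filter
open scoped ENNReal

/-- Let `G` be a locally compact group with left Haar measure `μ` and modular
function `del` (characterised by `Measure.map (· * s) μ = (del s)⁻¹ • μ`).  For
`f, g ∈ C_c(G)` define `f♯(t) = conj(f(t⁻¹)) · (del t)⁻¹` and
`(Kh)(u) = h(u⁻¹) · (del u)^{-1/2}`.  Then for every `s ∈ G`,
`∫_G (Kg)(s⁻¹t) · conj((Kf)(t)) dμ(t) = (del s)^{1/2} · (f♯ ∗ g)(s)`. -/
theorem stmt_4 {G : Type*} [Group G] [TopologicalSpace G] [IsTopologicalGroup G]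
    [LocallyCompactSpace G] [T2Space G] [MeasurableSpace G] [BorelSpace G]
    (μ : Measure G) [Measure.IsHaarMeasure μ]
    (del : G → ℝ) (hdel_pos : ∀ s, 0 < del s) (hdel_cont : Continuous del)
    (hdel : ∀ s : G, Measure.map (fun t => t * s) μ = ENNReal.ofReal (del s)⁻¹ • μ)
    (f g : G → ℂ) (hf : Continuous f) (hfc : HasCompactSupport f)
    (hg : Continuous g) (hgc : HasCompactSupport g) (s : G) :
    ∫ t, (g ((s⁻¹ * t)⁻¹) * ((del (s⁻¹ * t) ^ (-(1/2) : ℝ) : ℝ) : ℂ)) *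
        (starRingEnd ℂ) (f t⁻¹ * ((del t ^ (-(1/2) : ℝ) : ℝ) : ℂ)) ∂μ
      = ((del s ^ ((1:ℝ)/2) : ℝ) : ℂ) *
        ∫ t, ((starRingEnd ℂ) (f t⁻¹) * (((del t)⁻¹ : ℝ) : ℂ)) * g (t⁻¹ * s) ∂μ := by
  -- `del` is multiplicative
  obtain ⟨K, hKc, hK1⟩ := exists_compact_mem_nhds (1 : G)
  have hK0 : μ K ≠ 0 := (Measure.measure_pos_of_mem_nhds μ hK1).ne'
  have hKtop : μ K ≠ ∞ := hKc.measure_lt_top.ne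
  have hmul : ∀ a b : G, del (a * b) = del a * del b := by
    intro a b
    have hcomp : Measure.map (fun t => t * (a * b)) μ
        = Measure.map (fun t => t * b) (Measure.map (fun t => t * a) μ) := by
      rw [Measure.map_map (measurable_mul_const b) (measurable_mul_const a)]
      congr 1
      ext t
      simp [mul_assoc]
    rw [hdel, hdel, Measure.map_smul, hdel] at hcomp
    have := congrArg (fun ν : Measure G => ν K) hcomp
    simp only [Measure.smul_apply, smul_smul, smul_eq_mul] at this
    have h2 : ENNReal.ofReal (del (a * b))⁻¹
        = ENNReal.ofReal (del a)⁻¹ * ENNReal.ofReal (del b)⁻¹ := by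
      rw [← ENNReal.mul_left_inj hK0 hKtop]
      exact this
    rw [← ENNReal.ofReal_mul (inv_pos.mpr (hdel_pos a)).le,
      ENNReal.ofReal_eq_ofReal_iff (inv_pos.mpr (hdel_pos (a * b))).le
        (mul_pos (inv_pos.mpr (hdel_pos a)) (inv_pos.mpr (hdel_pos b))).le] at h2
    have h3 : (del (a * b))⁻¹ = (del a * del b)⁻¹ := by
      rw [h2, mul_inv]
    exact inv_injective h3
  have hone : del 1 = 1 := by
    have := hmul 1 1
    rw [one_mul] at this
    have h := hdel_pos 1
    nlinarith
  have hinv : ∀ a : G, del a⁻¹ = (del a)⁻¹ := by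
    intro a
    have := hmul a a⁻¹
    rw [mul_inv_cancel, hone] at this
    exact eq_inv_of_mul_eq_one_right this.symm
  rw [← MeasureTheory.integral_const_mul]
  refine integral_congr_ae (Filter.Eventually.of_forall fun t => ?_)
  have hst : del (s⁻¹ * t) = (del s)⁻¹ * del t := by rw [hmul, hinv]
  have hreal : del (s⁻¹ * t) ^ (-(1/2) : ℝ) * del t ^ (-(1/2) : ℝ)
      = del s ^ ((1:ℝ)/2) * (del t)⁻¹ := by
    rw [hst, Real.mul_rpow (inv_pos.mpr (hdel_pos s)).le (hdel_pos t).le,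
      Real.inv_rpow (hdel_pos s).le, Real.rpow_neg (hdel_pos s).le, inv_inv,
      mul_assoc, ← Real.rpow_add (hdel_pos t)]
    norm_num [Real.rpow_neg_one]
  simp only [mul_inv_rev, inv_inv, map_mul, Complex.conj_ofReal]
  calc (g (t⁻¹ * s) * ((del (s⁻¹ * t) ^ (-(1/2) : ℝ) : ℝ) : ℂ)) *
        ((starRingEnd ℂ) (f t⁻¹) * ((del t ^ (-(1/2) : ℝ) : ℝ) : ℂ))
      = (((del (s⁻¹ * t) ^ (-(1/2) : ℝ) * del t ^ (-(1/2) : ℝ) : ℝ)) : ℂ) *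
        ((starRingEnd ℂ) (f t⁻¹) * g (t⁻¹ * s)) := by push_cast; ring
    _ = _ := by rw [hreal]; push_cast; ring
end

section
/- Let G be a locally compact group with left Haar measure μ, and let X, Y ⊆ G be compact sets with 0 < μ(Y). Define e = μ(Y)⁻¹ 1_{(XY)⁻¹Y} and g₀ = e ∗ (1_Y)̌, so that g₀(s) = μ(sY ∩ (XY)⁻¹Y)/μ(Y) for all s ∈ G. Then 0 ≤ g₀ ≤ 1, g₀ is supported in the compact set (XY)⁻¹Y Y⁻¹, and g₀(s) = 1 for every s ∈ (XY)⁻¹. (This is the first step of the construction in Proposition 6.2.) -/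
open MeasureTheory Filter
open scoped ENNReal Pointwise

/-- The function `g₀(s) = μ(sY ∩ (XY)⁻¹Y)/μ(Y)` from the first step of the construction in
Proposition 6.2. -/
noncomputable def gZero {G : Type*} [Group G] [MeasurableSpace G]
    (μ : Measure G) (X Y : Set G) (s : G) : ℝ :=
  (μ ((s • Y) ∩ ((X * Y)⁻¹ * Y))).toReal / (μ Y).toReal

/-- Let `G` be a locally compact group with left Haar measure `μ` and let
`X, Y ⊆ G` be compact with `0 < μ(Y)`.  With `e = μ(Y)⁻¹ 1_{(XY)⁻¹Y}` and
`g₀ = e ∗ (1_Y)̌`, so that `g₀(s) = μ(sY ∩ (XY)⁻¹Y)/μ(Y)`, we have `0 ≤ g₀ ≤ 1`, `g₀` is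
supported in the compact set `(XY)⁻¹ Y Y⁻¹`, and `g₀ = 1` on `(XY)⁻¹`. -/
theorem stmt_8 {G : Type*} [Group G] [TopologicalSpace G] [IsTopologicalGroup G]
    [LocallyCompactSpace G] [T2Space G] [MeasurableSpace G] [BorelSpace G]
    (μ : Measure G) [Measure.IsHaarMeasure μ]
    (X Y : Set G) (hX : IsCompact X) (hY : IsCompact Y) (hY0 : 0 < μ Y) :
    -- the convolution formula `e ∗ (1_Y)̌ = g₀`:
    (∀ s : G,
      (μ Y).toReal⁻¹ *
          ∫ t, ((X * Y)⁻¹ * Y).indicator (fun _ => (1 : ℝ)) t *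
            Y.indicator (fun _ => (1 : ℝ)) ((t⁻¹ * s)⁻¹) ∂μ
        = gZero μ X Y s) ∧
    (∀ s : G, 0 ≤ gZero μ X Y s ∧ gZero μ X Y s ≤ 1) ∧
    IsCompact ((X * Y)⁻¹ * Y * Y⁻¹) ∧
    (∀ s : G, gZero μ X Y s ≠ 0 → s ∈ (X * Y)⁻¹ * Y * Y⁻¹) ∧
    (∀ s ∈ (X * Y)⁻¹, gZero μ X Y s = 1) := by
  set K : Set G := (X * Y)⁻¹ * Y with hKdef
  have hK : IsCompact K := ((hX.mul hY).inv).mul hY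
  have hKm : MeasurableSet K := hK.isClosed.measurableSet
  have hYm : MeasurableSet Y := hY.isClosed.measurableSet
  have hsY : ∀ s : G, MeasurableSet (s • Y) := fun s =>
    (hY.smul s).isClosed.measurableSet
  have hsmul : ∀ s : G, μ (s • Y) = μ Y := fun s => MeasureTheory.measure_smul μ s Y
  have hYfin : μ Y ≠ ⊤ := hY.measure_lt_top.ne
  have hYtR : 0 < (μ Y).toReal := ENNReal.toReal_pos hY0.ne' hYfin
  refine ⟨?_, ?_, ?_, ?_, ?_⟩
  · intro s
    have hind : ∀ t : G,
        K.indicator (fun _ => (1 : ℝ)) t * Y.indicator (fun _ => (1 : ℝ)) ((t⁻¹ * s)⁻¹)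
          = ((s • Y) ∩ K).indicator (fun _ => (1 : ℝ)) t := by
      intro t
      have h1 : (t⁻¹ * s)⁻¹ = s⁻¹ * t := by group
      rw [h1]
      by_cases ht : t ∈ K <;> by_cases ht' : t ∈ s • Y <;>
        simp_all [Set.indicator_apply, Set.mem_smul_set_iff_inv_smul_mem, smul_eq_mul]
    rw [show (∫ t, K.indicator (fun _ => (1 : ℝ)) t *
          Y.indicator (fun _ => (1 : ℝ)) ((t⁻¹ * s)⁻¹) ∂μ)
        = ∫ t, ((s • Y) ∩ K).indicator (fun _ => (1 : ℝ)) t ∂μ from by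
      simp_rw [hind]]
    rw [show (fun t => ((s • Y) ∩ K).indicator (fun _ => (1 : ℝ)) t)
        = ((s • Y) ∩ K).indicator (1 : G → ℝ) from rfl,
      integral_indicator_one ((hsY s).inter hKm)]
    rw [gZero, div_eq_inv_mul]
    rfl
  · intro s
    constructor
    · exact div_nonneg ENNReal.toReal_nonneg ENNReal.toReal_nonneg
    · rw [gZero, div_le_one hYtR]
      have : μ ((s • Y) ∩ K) ≤ μ Y := by
        rw [← hsmul s]; exact measure_mono Set.inter_subset_left
      exact ENNReal.toReal_le_toReal (lt_of_le_of_lt this hY.measure_lt_top).ne hYfin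
        |>.mpr this
  · exact hK.mul hY.inv
  · intro s hs
    have hne : ((s • Y) ∩ K).Nonempty := by
      by_contra h
      rw [Set.not_nonempty_iff_eq_empty] at h
      apply hs
      rw [gZero, h, measure_empty, ENNReal.toReal_zero, zero_div]
    obtain ⟨t, ht1, ht2⟩ := hne
    obtain ⟨y, hy, rfl⟩ := ht1
    refine ⟨s * y, ht2, y⁻¹, Set.inv_mem_inv.mpr hy, by group⟩
  · intro s hs
    have hsub : s • Y ⊆ K := by
      rintro _ ⟨y, hy, rfl⟩
      exact ⟨s, hs, y, hy, rfl⟩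
    rw [gZero, Set.inter_eq_left.mpr hsub, hsmul, div_self hYtR.ne']
end
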